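/- Decomposition identity: let d ≥ 2 and let p satisfy 2 < p < (2d² + 1)/(d−1)², and set α := 1 − (p−1)(d−1)²/(d(d+2)). Then α > 0, and for all real numbers a, b and all c > 0, a² + (p−1)(d/(d+2)) b⁴/c² − 2(p−1)((d−1)/(d+2)) b² a / c = α a² + ((p−1)/(d+2)) ( ((d−1)/√d) a − √d b²/c )²; in particular the left-hand side is ≥ α a². -/

import Mathlib

/-- Decomposition identity for the integrand in the Fisher information inequality,
with `α = 1 − (p−1)(d−1)²/(d(d+2)) > 0`. -/
theorem decomposition_identity (d : ℕ) (hd : 2 ≤ d) (p : ℝ) (hp1 : 2 < p)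
    (hp2 : p < (2 * (d : ℝ) ^ 2 + 1) / ((d : ℝ) - 1) ^ 2) :
    0 < 1 - (p - 1) * ((d : ℝ) - 1) ^ 2 / ((d : ℝ) * ((d : ℝ) + 2)) ∧
    ∀ a b c : ℝ, 0 < c →
      (a ^ 2 + (p - 1) * ((d : ℝ) / ((d : ℝ) + 2)) * b ^ 4 / c ^ 2 -
            2 * (p - 1) * (((d : ℝ) - 1) / ((d : ℝ) + 2)) * b ^ 2 * a / c =
          (1 - (p - 1) * ((d : ℝ) - 1) ^ 2 / ((d : ℝ) * ((d : ℝ) + 2))) * a ^ 2 +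
            ((p - 1) / ((d : ℝ) + 2)) *
              ((((d : ℝ) - 1) / Real.sqrt d) * a - Real.sqrt d * b ^ 2 / c) ^ 2) ∧
        a ^ 2 + (p - 1) * ((d : ℝ) / ((d : ℝ) + 2)) * b ^ 4 / c ^ 2 -
            2 * (p - 1) * (((d : ℝ) - 1) / ((d : ℝ) + 2)) * b ^ 2 * a / c ≥
          (1 - (p - 1) * ((d : ℝ) - 1) ^ 2 / ((d : ℝ) * ((d : ℝ) + 2))) * a ^ 2 := by
  have hd2 : (2 : ℝ) ≤ (d : ℝ) := by exact_mod_cast hd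
  have hdpos : (0 : ℝ) < d := by linarith
  have hsq : (0 : ℝ) < ((d : ℝ) - 1) ^ 2 := by nlinarith
  have hα : 0 < 1 - (p - 1) * ((d : ℝ) - 1) ^ 2 / ((d : ℝ) * ((d : ℝ) + 2)) := by
    rw [sub_pos, div_lt_one (by positivity)]
    have hmul : p * ((d : ℝ) - 1) ^ 2 < 2 * (d : ℝ) ^ 2 + 1 :=
      (lt_div_iff₀ hsq).mp hp2
    nlinarith
  refine ⟨hα, fun a b c hc => ?_⟩
  have hsqrt : Real.sqrt d ^ 2 = (d : ℝ) := Real.sq_sqrt hdpos.le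
  have hsne : Real.sqrt d ≠ 0 := ne_of_gt (Real.sqrt_pos.mpr hdpos)
  have hcross : 2 * (((d : ℝ) - 1) / Real.sqrt d * a) * (Real.sqrt d * b ^ 2 / c)
      = 2 * (((d : ℝ) - 1) * a * b ^ 2 / c) := by field_simp
  have hkey : (((d : ℝ) - 1) / Real.sqrt d * a - Real.sqrt d * b ^ 2 / c) ^ 2 =
      ((d : ℝ) - 1) ^ 2 / (d : ℝ) * a ^ 2 + (d : ℝ) * b ^ 4 / c ^ 2
        - 2 * (((d : ℝ) - 1) * a * b ^ 2 / c) := by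
    rw [sub_sq, hcross, mul_pow, div_pow, div_pow, mul_pow, hsqrt]
    ring
  have heq : a ^ 2 + (p - 1) * ((d : ℝ) / ((d : ℝ) + 2)) * b ^ 4 / c ^ 2 -
        2 * (p - 1) * (((d : ℝ) - 1) / ((d : ℝ) + 2)) * b ^ 2 * a / c =
      (1 - (p - 1) * ((d : ℝ) - 1) ^ 2 / ((d : ℝ) * ((d : ℝ) + 2))) * a ^ 2 +
        ((p - 1) / ((d : ℝ) + 2)) *
          ((((d : ℝ) - 1) / Real.sqrt d) * a - Real.sqrt d * b ^ 2 / c) ^ 2 := by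
    rw [hkey]; field_simp; ring
  refine ⟨heq, ?_⟩
  have hp0 : (0 : ℝ) ≤ p - 1 := by linarith
  have h1 : 0 ≤ ((p - 1) / ((d : ℝ) + 2)) *
      ((((d : ℝ) - 1) / Real.sqrt d) * a - Real.sqrt d * b ^ 2 / c) ^ 2 :=
    mul_nonneg (div_nonneg hp0 (by positivity)) (sq_nonneg _)
  linarith [heq.ge]
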